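/- Let f : [0,T) × [0,1] → ℝⁿ be smooth with f(t,·) regular for each t, suppose ∂ₜf = V is purely normal on (0,T) × (0,1), that the endpoints f(t,0), f(t,1) are constant in t, and that the natural boundary condition κ(t,x) = ζ − ⟨ζ, τ(t,x)⟩τ(t,x) holds for x ∈ {0,1} and all t, for a fixed ζ ∈ ℝⁿ. Then at each boundary point x ∈ {0,1} and each t ∈ (0,T): ∇ₛ²(∂ₜf) = −⟨ζ, τ⟩∇ₛ(∂ₜf). -/

import Mathlib

open scoped RealInnerProductSpace
open MeasureTheory

noncomputable section

abbrev En (n : ℕ) := EuclideanSpace ℝ (Fin n)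

variable {n : ℕ}

/-- Arc-length derivative along `f`. -/
def aD (f g : ℝ → En n) : ℝ → En n := fun x => ‖deriv f x‖⁻¹ • deriv g x

/-- Iterated arc-length derivative. -/
def aDIter (f : ℝ → En n) : ℕ → (ℝ → En n) → ℝ → En n
  | 0, g => g
  | k + 1, g => aD f (aDIter f k g)

/-- Unit tangent vector. -/
def tang (f : ℝ → En n) : ℝ → En n := aD f f

/-- Curvature vector. -/
def curv (f : ℝ → En n) : ℝ → En n := aD f (tang f)

/-- Normal component of the arc-length derivative of a vector field along `f`. -/
def nS (f g : ℝ → En n) : ℝ → En n :=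
  fun x => aD f g x - ⟪aD f g x, tang f x⟫ • tang f x

/-- Iterated normal arc-length derivative. -/
def nSIter (f : ℝ → En n) : ℕ → (ℝ → En n) → ℝ → En n
  | 0, g => g
  | k + 1, g => nS f (nSIter f k g)

/-- Arc-length derivative of a scalar field along `f`. -/
def aDS (f : ℝ → En n) (g : ℝ → ℝ) : ℝ → ℝ := fun x => ‖deriv f x‖⁻¹ * deriv g x

/-- Length of the curve. -/
def len (f : ℝ → En n) : ℝ := ∫ x in (0:ℝ)..1, ‖deriv f x‖

/-- Willmore–Helfrich energy. -/
def WH (lam : ℝ) (ζ : En n) (f : ℝ → En n) : ℝ :=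
  (∫ x in (0:ℝ)..1, ((1/2) * ‖curv f x‖ ^ 2 - ⟪curv f x, ζ⟫) * ‖deriv f x‖) + lam * len f

/-- Time derivative of a time dependent field. -/
def pT (g : ℝ → ℝ → En n) : ℝ → ℝ → En n := fun t x => deriv (fun s => g s x) t

/-- Normal component (w.r.t. the curve `f t`) of the time derivative. -/
def nT (f g : ℝ → ℝ → En n) : ℝ → ℝ → En n :=
  fun t x => pT g t x - ⟪pT g t x, tang (f t) x⟫ • tang (f t) x

/-- Normal arc-length derivative of a time dependent field. -/
def nSF (f g : ℝ → ℝ → En n) : ℝ → ℝ → En n := fun t => nS (f t) (g t)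

/-- Tangential component of the velocity. -/
def tanComp (f : ℝ → ℝ → En n) : ℝ → ℝ → ℝ := fun t x => ⟪pT f t x, tang (f t) x⟫

/-- Normal velocity. -/
def normVel (f : ℝ → ℝ → En n) : ℝ → ℝ → En n :=
  fun t x => pT f t x - tanComp f t x • tang (f t) x

/-- Scale invariant `Lᵖ` norm of the `i`-th normal derivative of `g` along `f`. -/
def sN (f : ℝ → En n) (p : ℝ) (i : ℕ) (g : ℝ → En n) : ℝ :=
  len f ^ ((i : ℝ) + 1 - 1/p) * (∫ x in (0:ℝ)..1, ‖nSIter f i g x‖ ^ p * ‖deriv f x‖) ^ (1/p)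

/-- Scale invariant Sobolev-type norm. -/
def sNk (f : ℝ → En n) (k : ℕ) (g : ℝ → En n) : ℝ :=
  ∑ i ∈ Finset.range (k + 1), sN f 2 i g

section AuxPD

open Function Filter


variable {E : Type*} [NormedAddCommGroup E] [InnerProductSpace ℝ E]

lemma bsdv_infty_add_one_le : ((⊤:ℕ∞) : WithTop ℕ∞) + 1 ≤ ((⊤:ℕ∞) : WithTop ℕ∞) := by
  rw [show ((⊤:ℕ∞):WithTop ℕ∞)+1 = ((⊤+1:ℕ∞):WithTop ℕ∞) from rfl, WithTop.coe_le_coe]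
  exact le_top

lemma bsdv_two_le_infty : (2 : WithTop ℕ∞) ≤ ((⊤:ℕ∞) : WithTop ℕ∞) := by
  rw [show (2:WithTop ℕ∞) = ((2:ℕ∞):WithTop ℕ∞) from rfl, WithTop.coe_le_coe]
  exact le_top

lemma bsdv_one_le_infty : ((⊤:ℕ∞) : WithTop ℕ∞) ≠ 0 := by
  simp

/-- Partial derivative of `G : ℝ × ℝ → E` in direction `v`. -/
def pd (v : ℝ × ℝ) (G : ℝ × ℝ → E) : ℝ × ℝ → E := fun q => fderiv ℝ G q v

lemma hasDerivAt_sliceX {G : ℝ × ℝ → E} {p : ℝ × ℝ} (h : DifferentiableAt ℝ G p) :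
    HasDerivAt (fun x => G (p.1, x)) (pd (0,1) G p) p.2 := by
  have h1 : HasDerivAt (fun x : ℝ => ((p.1, x) : ℝ × ℝ)) ((0 : ℝ), (1 : ℝ)) p.2 :=
    (hasDerivAt_const _ _).prodMk (hasDerivAt_id _)
  have := h.hasFDerivAt.comp_hasDerivAt p.2 (by simpa using h1)
  simpa [pd, Function.comp_def] using this

lemma hasDerivAt_sliceT {G : ℝ × ℝ → E} {p : ℝ × ℝ} (h : DifferentiableAt ℝ G p) :
    HasDerivAt (fun t => G (t, p.2)) (pd (1,0) G p) p.1 := by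
  have h1 : HasDerivAt (fun t : ℝ => ((t, p.2) : ℝ × ℝ)) ((1 : ℝ), (0 : ℝ)) p.1 :=
    (hasDerivAt_id _).prodMk (hasDerivAt_const _ _)
  have := h.hasFDerivAt.comp_hasDerivAt p.1 (by simpa using h1)
  simpa [pd, Function.comp_def] using this

lemma contDiffAt_pd {G : ℝ × ℝ → E} {p : ℝ × ℝ} (v : ℝ × ℝ)
    (h : ContDiffAt ℝ (⊤ : ℕ∞) G p) : ContDiffAt ℝ (⊤ : ℕ∞) (pd v G) p :=
  (h.fderiv_right (m := (⊤:ℕ∞)) bsdv_infty_add_one_le).clm_apply contDiffAt_const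

lemma pd_swap {G : ℝ × ℝ → E} {p : ℝ × ℝ} (h : ContDiffAt ℝ (⊤ : ℕ∞) G p) (v w : ℝ × ℝ) :
    fderiv ℝ (pd v G) p w = fderiv ℝ (pd w G) p v := by
  have hd : DifferentiableAt ℝ (fderiv ℝ G) p :=
    (h.fderiv_right (m := (⊤:ℕ∞)) bsdv_infty_add_one_le).differentiableAt bsdv_one_le_infty
  have key : ∀ u : ℝ × ℝ, fderiv ℝ (pd u G) p =
      (ContinuousLinearMap.apply ℝ E u).comp (fderiv ℝ (fderiv ℝ G) p) := by
    intro u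
    have : pd u G = (ContinuousLinearMap.apply ℝ E u) ∘ (fderiv ℝ G) := rfl
    rw [this]
    exact ((ContinuousLinearMap.apply ℝ E u).hasFDerivAt.comp p hd.hasFDerivAt).fderiv
  have hsymm := (h.isSymmSndFDerivAt (by simpa using bsdv_two_le_infty)).eq v w
  simp only [key, ContinuousLinearMap.coe_comp', Function.comp_apply,
    ContinuousLinearMap.apply_apply]
  exact hsymm.symm ▸ rfl

lemma hasDerivAt_norm' {f : ℝ → E} {f' : E} {x : ℝ} (hf : HasDerivAt f f' x)
    (h0 : f x ≠ 0) : HasDerivAt (fun y => ‖f y‖) (⟪f x, f'⟫ / ‖f x‖) x := by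
  have h1 : HasDerivAt (fun y => ‖f y‖ ^ 2) (2 * ⟪f x, f'⟫) x := hf.norm_sq
  have h2 : HasDerivAt (fun y => Real.sqrt (‖f y‖ ^ 2)) ((2 * ⟪f x, f'⟫) / (2 * Real.sqrt (‖f x‖ ^ 2))) x :=
    h1.sqrt (pow_ne_zero _ (norm_ne_zero_iff.mpr h0))
  have h3 : (fun y => Real.sqrt (‖f y‖ ^ 2)) = fun y => ‖f y‖ := by
    funext y; rw [Real.sqrt_sq (norm_nonneg _)]
  rw [h3] at h2
  convert h2 using 1
  rw [Real.sqrt_sq (norm_nonneg (f x))]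
  have hn : ‖f x‖ ≠ 0 := norm_ne_zero_iff.mpr h0
  field_simp

lemma deriv_eq_zero_of_eqOn_Icc {g : ℝ → ℝ} {x : ℝ} (hx : x ∈ Set.Icc (0:ℝ) 1)
    (hg : DifferentiableAt ℝ g x) (h0 : ∀ y ∈ Set.Icc (0:ℝ) 1, g y = 0) :
    deriv g x = 0 := by
  have h1 : HasDerivWithinAt g (deriv g x) (Set.Icc 0 1) x :=
    hg.hasDerivAt.hasDerivWithinAt
  have h2 : HasDerivWithinAt g 0 (Set.Icc 0 1) x :=
    (hasDerivWithinAt_const x _ (0:ℝ)).congr h0 (h0 x hx)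
  exact UniqueDiffWithinAt.eq_deriv _ (uniqueDiffOn_Icc zero_lt_one x hx) h1 h2

end AuxPD

/-- At the boundary, under a purely normal flow with fixed endpoints and natural
boundary conditions: `∇ₛ²(∂ₜf) = -⟨ζ,τ⟩ ∇ₛ(∂ₜf)`. -/
theorem boundary_second_derivative_velocity (n : ℕ) (hn : 2 ≤ n)
    (T : ℝ) (hT : 0 < T) (ζ : En n)
    (f : ℝ → ℝ → En n)
    (hsmooth : ContDiff ℝ (⊤ : ℕ∞) (Function.uncurry f))
    (hreg : ∀ t ∈ Set.Ico (0:ℝ) T, ∀ x ∈ Set.Icc (0:ℝ) 1, deriv (f t) x ≠ 0)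
    (hnormalflow : ∀ t ∈ Set.Ioo (0:ℝ) T, ∀ x ∈ Set.Ioo (0:ℝ) 1,
      ⟪pT f t x, tang (f t) x⟫ = 0)
    (hbd₀ : ∀ t ∈ Set.Ico (0:ℝ) T, f t 0 = f 0 0)
    (hbd₁ : ∀ t ∈ Set.Ico (0:ℝ) T, f t 1 = f 0 1)
    (hnat : ∀ t ∈ Set.Ico (0:ℝ) T, ∀ x ∈ ({0, 1} : Set ℝ),
      curv (f t) x = ζ - ⟪ζ, tang (f t) x⟫ • tang (f t) x) :
    ∀ t ∈ Set.Ioo (0:ℝ) T, ∀ x ∈ ({0, 1} : Set ℝ),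
      nS (f t) (nS (f t) (pT f t)) x = -⟪ζ, tang (f t) x⟫ • nS (f t) (pT f t) x := by
  classical
  intro t ht x₀ hx₀
  -- x₀ is an endpoint, hence in [0,1]
  have hx₀Icc : x₀ ∈ Set.Icc (0:ℝ) 1 := by
    rcases hx₀ with h | h <;> simp_all
  have htIco : t ∈ Set.Ico (0:ℝ) T := ⟨le_of_lt ht.1, ht.2⟩
  -- global smooth function on the plane
  set G : ℝ × ℝ → En n := Function.uncurry f with hGdef
  have hGsm : ContDiff ℝ (⊤ : ℕ∞) G := hsmooth
  set p : ℝ × ℝ := (t, x₀) with hpdef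
  -- partial derivatives
  set fx : ℝ × ℝ → En n := pd (0,1) G with hfxdef
  set V : ℝ × ℝ → En n := pd (1,0) G with hVdef
  have hfxsm : ∀ q : ℝ × ℝ, ContDiffAt ℝ (⊤:ℕ∞) fx q := fun q => contDiffAt_pd _ hGsm.contDiffAt
  have hVsm : ∀ q : ℝ × ℝ, ContDiffAt ℝ (⊤:ℕ∞) V q := fun q => contDiffAt_pd _ hGsm.contDiffAt
  -- slices
  have hderiv : ∀ s x : ℝ, HasDerivAt (f s) (fx (s, x)) x := by
    intro s x
    exact hasDerivAt_sliceX (p := (s,x)) (hGsm.differentiable bsdv_one_le_infty).differentiableAt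
  have hderiv' : ∀ s x : ℝ, deriv (f s) x = fx (s, x) := fun s x => (hderiv s x).deriv
  have hpT : ∀ s x : ℝ, pT f s x = V (s, x) := by
    intro s x
    exact (hasDerivAt_sliceT (p := (s,x)) (hGsm.differentiable bsdv_one_le_infty).differentiableAt).deriv
  -- tangent
  set tau : ℝ × ℝ → En n := fun q => ‖fx q‖⁻¹ • fx q with htaudef
  have htau : ∀ s x : ℝ, tang (f s) x = tau (s, x) := by
    intro s x
    simp only [tang, aD, hderiv', htaudef]
  -- regularity at p and nearby
  have hfxp : fx p ≠ 0 := by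
    rw [← hderiv' t x₀]
    exact hreg t htIco x₀ hx₀Icc
  have hrp : ‖fx p‖ ≠ 0 := norm_ne_zero_iff.mpr hfxp
  have hUnhd : ∀ᶠ q in nhds p, fx q ≠ 0 :=
    (hfxsm p).continuousAt.eventually_ne hfxp
  -- smoothness of tau where fx ≠ 0
  have htausm : ∀ q : ℝ × ℝ, fx q ≠ 0 → ContDiffAt ℝ (⊤:ℕ∞) tau q := by
    intro q hq
    exact (((hfxsm q).norm ℝ hq).inv (norm_ne_zero_iff.mpr hq)).smul (hfxsm q)
  set kap : ℝ × ℝ → En n := fun q => ‖fx q‖⁻¹ • pd (0,1) tau q with hkapdef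
  set NN : ℝ × ℝ → En n := fun q =>
    ‖fx q‖⁻¹ • pd (0,1) V q - ⟪‖fx q‖⁻¹ • pd (0,1) V q, tau q⟫ • tau q with hNNdef
  -- Step A : the first normal derivative equals NN on the slice t
  have hA : ∀ x : ℝ, nS (f t) (pT f t) x = NN (t, x) := by
    intro x
    have hVd : HasDerivAt (fun y => V (t, y)) (pd (0,1) V (t,x)) x :=
      hasDerivAt_sliceX (p := (t,x)) ((hVsm (t,x)).differentiableAt bsdv_one_le_infty)
    have h1 : deriv (pT f t) x = pd (0,1) V (t,x) := by
      rw [show pT f t = fun y => V (t,y) from funext (hpT t)]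
      exact hVd.deriv
    simp only [nS, aD, h1, hderiv' t x, htau t x, hNNdef]
  -- mixed partial symmetry for G : pd (1,0) fx = pd (0,1) V pointwise
  have hswapG : ∀ q : ℝ × ℝ, fderiv ℝ fx q (1,0) = pd (0,1) V q := by
    intro q
    exact pd_swap hGsm.contDiffAt (0,1) (1,0)
  -- Step B : NN = ∂_t tau near p
  have hB : ∀ᶠ q in nhds p, NN q = pd (1,0) tau q := by
    filter_upwards [hUnhd] with q hq
    have hrq : ‖fx q‖ ≠ 0 := norm_ne_zero_iff.mpr hq
    have hfxT : HasDerivAt (fun s => fx (s, q.2)) (fderiv ℝ fx q (1,0)) q.1 :=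
      hasDerivAt_sliceT (p := q) ((hfxsm q).differentiableAt bsdv_one_le_infty)
    have hnorm : HasDerivAt (fun s => ‖fx (s, q.2)‖)
        (⟪fx q, fderiv ℝ fx q (1,0)⟫ / ‖fx q‖) q.1 := hasDerivAt_norm' hfxT hq
    have hinv : HasDerivAt (fun s => ‖fx (s, q.2)‖⁻¹)
        (-(⟪fx q, fderiv ℝ fx q (1,0)⟫ / ‖fx q‖) / (‖fx q‖ ^ 2)) q.1 := hnorm.inv hrq
    have htauT : HasDerivAt (fun s => tau (s, q.2))
        (‖fx q‖⁻¹ • fderiv ℝ fx q (1,0) +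
          (-(⟪fx q, fderiv ℝ fx q (1,0)⟫ / ‖fx q‖) / (‖fx q‖ ^ 2)) • fx q) q.1 :=
      hinv.smul hfxT
    have htauT' : HasDerivAt (fun s => tau (s, q.2)) (pd (1,0) tau q) q.1 :=
      hasDerivAt_sliceT (p := q) ((htausm q hq).differentiableAt bsdv_one_le_infty)
    have huniq := htauT.unique htauT'
    rw [← huniq, hNNdef]
    simp only [hswapG q] at *
    rw [real_inner_smul_left, real_inner_smul_right]
    rw [real_inner_comm (pd (0,1) V q) (fx q)]
    match_scalars
    all_goals try ring
    all_goals field_simp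
    all_goals try ring
    all_goals try exact Or.inl trivial
  -- Step F : tangential quantities vanish at p
  have hIcoNhds : Set.Ico (0:ℝ) T ∈ nhds t :=
    Filter.mem_of_superset (isOpen_Ioo.mem_nhds ht) Set.Ioo_subset_Ico_self
  have hV0 : V (t, 0) = 0 := by
    rw [← hpT t 0]
    have hev : (fun s => f s 0) =ᶠ[nhds t] fun _ => f 0 0 := by
      filter_upwards [hIcoNhds] with s hs
      exact hbd₀ s hs
    show deriv (fun s => f s 0) t = 0
    rw [hev.deriv_eq]
    simp
  have hV1 : V (t, 1) = 0 := by
    rw [← hpT t 1]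
    have hev : (fun s => f s 1) =ᶠ[nhds t] fun _ => f 0 1 := by
      filter_upwards [hIcoNhds] with s hs
      exact hbd₁ s hs
    show deriv (fun s => f s 1) t = 0
    rw [hev.deriv_eq]
    simp
  have hx01 : x₀ = 0 ∨ x₀ = 1 := by
    simpa [Set.mem_insert_iff, Set.mem_singleton_iff] using hx₀
  have hVp : V p = 0 := by
    rcases hx01 with h | h <;> rw [hpdef, h]
    · exact hV0
    · exact hV1
  have hWtau : ⟪pd (0,1) V p, tau p⟫ = 0 := by
    have hVslice : HasDerivAt (fun x => V (t, x)) (pd (0,1) V p) x₀ :=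
      hasDerivAt_sliceX (p := p) ((hVsm p).differentiableAt bsdv_one_le_infty)
    have hτslice : HasDerivAt (fun x => tau (t, x)) (pd (0,1) tau p) x₀ :=
      hasDerivAt_sliceX (p := p) ((htausm p hfxp).differentiableAt bsdv_one_le_infty)
    have hφd : HasDerivAt (fun x => ⟪V (t, x), tau (t, x)⟫)
        (⟪V p, pd (0,1) tau p⟫ + ⟪pd (0,1) V p, tau p⟫) x₀ := hVslice.inner ℝ hτslice
    have hφ0 : ∀ y ∈ Set.Icc (0:ℝ) 1, ⟪V (t, y), tau (t, y)⟫ = 0 := by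
      intro y hy
      by_cases hy0 : y = 0
      · rw [hy0, hV0, inner_zero_left]
      by_cases hy1 : y = 1
      · rw [hy1, hV1, inner_zero_left]
      have hyo : y ∈ Set.Ioo (0:ℝ) 1 :=
        ⟨lt_of_le_of_ne hy.1 (Ne.symm hy0), lt_of_le_of_ne hy.2 hy1⟩
      have := hnormalflow t ht y hyo
      rwa [hpT t y, htau t y] at this
    have hz : deriv (fun x => ⟪V (t, x), tau (t, x)⟫) x₀ = 0 :=
      deriv_eq_zero_of_eqOn_Icc hx₀Icc hφd.differentiableAt hφ0
    rw [hφd.deriv] at hz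
    rw [hVp, inner_zero_left, zero_add] at hz
    exact hz
  -- Step G : time derivative of the curvature at the boundary point
  have hkapsm : ContDiffAt ℝ (⊤:ℕ∞) kap p :=
    (((hfxsm p).norm ℝ hfxp).inv hrp).smul (contDiffAt_pd (0,1) (htausm p hfxp))
  have hkapderiv : HasDerivAt (fun s => kap (s, x₀)) (fderiv ℝ kap p (1,0)) t :=
    hasDerivAt_sliceT (p := p) (hkapsm.differentiableAt bsdv_one_le_infty)
  have hτT : HasDerivAt (fun s => tau (s, x₀)) (pd (1,0) tau p) t :=
    hasDerivAt_sliceT (p := p) ((htausm p hfxp).differentiableAt bsdv_one_le_infty)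
  have hNp : NN p = pd (1,0) tau p := hB.self_of_nhds
  have hcontsl : ContinuousAt (fun s : ℝ => ((s, x₀) : ℝ × ℝ)) t :=
    (continuous_id.prodMk continuous_const).continuousAt
  have hUs : ∀ᶠ s in nhds t, fx (s, x₀) ≠ 0 := hcontsl.eventually hUnhd
  have hG2 : fderiv ℝ kap p (1,0) = -⟪ζ, NN p⟫ • tau p - ⟪ζ, tau p⟫ • NN p := by
    have h1 : HasDerivAt (fun s => ⟪ζ, tau (s, x₀)⟫) (⟪ζ, pd (1,0) tau p⟫) t := by
      have := (hasDerivAt_const t ζ).inner ℝ hτT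
      simpa using this
    have h2 := h1.smul hτT
    have hRHS : HasDerivAt (fun s => ζ - ⟪ζ, tau (s, x₀)⟫ • tau (s, x₀))
        (-(⟪ζ, tau p⟫ • pd (1,0) tau p + ⟪ζ, pd (1,0) tau p⟫ • tau p)) t := by
      have h3 : HasDerivAt (fun s => ζ - ⟪ζ, tau (s, x₀)⟫ • tau (s, x₀)) _ t :=
        (hasDerivAt_const t ζ).sub h2
      convert h3 using 1
      rw [zero_sub]
    have hev : (fun s => kap (s, x₀)) =ᶠ[nhds t]
        (fun s => ζ - ⟪ζ, tau (s, x₀)⟫ • tau (s, x₀)) := by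
      filter_upwards [hIcoNhds, hUs] with s hs hfs
      have hτd : HasDerivAt (fun x => tau (s, x)) (pd (0,1) tau (s, x₀)) x₀ :=
        hasDerivAt_sliceX (p := (s,x₀)) ((htausm (s,x₀) hfs).differentiableAt bsdv_one_le_infty)
      have hcurv : curv (f s) x₀ = kap (s, x₀) := by
        show aD (f s) (tang (f s)) x₀ = _
        rw [show aD (f s) (tang (f s)) x₀
            = ‖deriv (f s) x₀‖⁻¹ • deriv (tang (f s)) x₀ from rfl]
        rw [show tang (f s) = fun x => tau (s, x) from funext (htau s), hτd.deriv,
          hderiv' s x₀]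
      rw [← hcurv, hnat s hs x₀ hx₀, htau s x₀]
    have hL : HasDerivAt (fun s => kap (s, x₀))
        (-(⟪ζ, tau p⟫ • pd (1,0) tau p + ⟪ζ, pd (1,0) tau p⟫ • tau p)) t :=
      hRHS.congr_of_eventuallyEq hev
    have huniq := hL.unique hkapderiv
    rw [← huniq, ← hNp]
    module
  -- Step E : second mixed derivative of tau
  have hE : fderiv ℝ (pd (0,1) tau) p (1,0) = ‖fx p‖ • fderiv ℝ kap p (1,0) := by
    have hd : HasDerivAt (fun s => pd (0,1) tau (s, x₀))
        (fderiv ℝ (pd (0,1) tau) p (1,0)) t :=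
      hasDerivAt_sliceT (p := p)
        ((contDiffAt_pd (0,1) (htausm p hfxp)).differentiableAt bsdv_one_le_infty)
    have hfxT : HasDerivAt (fun s => fx (s, x₀)) (fderiv ℝ fx p (1,0)) t :=
      hasDerivAt_sliceT (p := p) ((hfxsm p).differentiableAt bsdv_one_le_infty)
    have hzero : ⟪fx p, fderiv ℝ fx p (1,0)⟫ = 0 := by
      rw [hswapG p]
      have hfxtau : fx p = ‖fx p‖ • tau p := by
        show fx p = ‖fx p‖ • (‖fx p‖⁻¹ • fx p)
        rw [smul_smul, mul_inv_cancel₀ hrp, one_smul]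
      rw [hfxtau, real_inner_smul_left, real_inner_comm, hWtau, mul_zero]
    have hnormT : HasDerivAt (fun s => ‖fx (s, x₀)‖) 0 t := by
      have := hasDerivAt_norm' hfxT hfxp
      rwa [hzero, zero_div] at this
    have hRHS : HasDerivAt (fun s => ‖fx (s, x₀)‖ • kap (s, x₀))
        (‖fx p‖ • fderiv ℝ kap p (1,0)) t := by
      have : HasDerivAt (fun s => ‖fx (s, x₀)‖ • kap (s, x₀)) _ t := hnormT.smul hkapderiv
      simpa [← hpdef] using this
    have hev : (fun s => pd (0,1) tau (s, x₀)) =ᶠ[nhds t]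
        (fun s => ‖fx (s, x₀)‖ • kap (s, x₀)) := by
      filter_upwards [hUs] with s hfs
      show pd (0,1) tau (s, x₀) = ‖fx (s,x₀)‖ • (‖fx (s,x₀)‖⁻¹ • pd (0,1) tau (s,x₀))
      rw [smul_smul, mul_inv_cancel₀ (norm_ne_zero_iff.mpr hfs), one_smul]
    exact ((hRHS.congr_of_eventuallyEq hev).unique hd).symm
  -- Step C/D : derivative of the first normal derivative
  have hC : deriv (nS (f t) (pT f t)) x₀ = fderiv ℝ (pd (0,1) tau) p (1,0) := by
    have hW := contDiffAt_pd (0,1) (hVsm p)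
    have hinv := ((hfxsm p).norm ℝ hfxp).inv hrp
    have hNNsm : ContDiffAt ℝ (⊤:ℕ∞) NN p :=
      (hinv.smul hW).sub (((hinv.smul hW).inner ℝ (htausm p hfxp)).smul (htausm p hfxp))
    have hd : HasDerivAt (fun x => NN (t, x)) (fderiv ℝ NN p (0,1)) x₀ :=
      hasDerivAt_sliceX (p := p) (hNNsm.differentiableAt bsdv_one_le_infty)
    rw [show nS (f t) (pT f t) = fun x => NN (t, x) from funext hA, hd.deriv]
    have h3 : fderiv ℝ NN p = fderiv ℝ (pd (1,0) tau) p :=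
      Filter.EventuallyEq.fderiv_eq (f := pd (1,0) tau) (f₁ := NN) hB
    rw [show (fderiv ℝ NN p) (0,1) = (fderiv ℝ (pd (1,0) tau) p) (0,1) from by rw [h3]]
    exact pd_swap (htausm p hfxp) (1,0) (0,1)
  -- assembly
  have hB0 : ‖fx p‖⁻¹ • deriv (nS (f t) (pT f t)) x₀
      = -⟪ζ, NN p⟫ • tau p - ⟪ζ, tau p⟫ • NN p := by
    rw [hC, hE, smul_smul, inv_mul_cancel₀ hrp, one_smul, hG2]
  have hunit : ⟪tau p, tau p⟫ = 1 := by
    have htp : tau p = ‖fx p‖⁻¹ • fx p := rfl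
    rw [htp, real_inner_smul_left, real_inner_smul_right, real_inner_self_eq_norm_mul_norm]
    field_simp
  have hNτ0 : ⟪NN p, tau p⟫ = 0 := by
    have hNN : NN p = ‖fx p‖⁻¹ • pd (0,1) V p
        - ⟪‖fx p‖⁻¹ • pd (0,1) V p, tau p⟫ • tau p := rfl
    rw [hNN, inner_sub_left, real_inner_smul_left, real_inner_smul_left, hunit, mul_one,
      sub_self]
  have htaup : tang (f t) x₀ = tau p := htau t x₀
  have hApp : nS (f t) (pT f t) x₀ = NN p := hA x₀
  have hgoal1 : nS (f t) (nS (f t) (pT f t)) x₀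
      = ‖fx p‖⁻¹ • deriv (nS (f t) (pT f t)) x₀
        - ⟪‖fx p‖⁻¹ • deriv (nS (f t) (pT f t)) x₀, tau p⟫ • tau p := by
    show aD (f t) (nS (f t) (pT f t)) x₀
        - ⟪aD (f t) (nS (f t) (pT f t)) x₀, tang (f t) x₀⟫ • tang (f t) x₀ = _
    rw [show aD (f t) (nS (f t) (pT f t)) x₀
        = ‖deriv (f t) x₀‖⁻¹ • deriv (nS (f t) (pT f t)) x₀ from rfl, htaup, hderiv' t x₀]
  rw [hgoal1, hB0, htaup, hApp]
  have hip : ⟪-⟪ζ, NN p⟫ • tau p - ⟪ζ, tau p⟫ • NN p, tau p⟫ = -⟪ζ, NN p⟫ := by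
    rw [inner_sub_left, real_inner_smul_left (tau p) (tau p) (-⟪ζ, NN p⟫),
      real_inner_smul_left (NN p) (tau p) (⟪ζ, tau p⟫), hunit, hNτ0]
    ring
  rw [hip]
  module

end
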